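/- For every λ > 0, r ∈ ℝ and integer k ≥ 2, the functions e_k satisfy ∂_r e_1(λ,r) = e^{-iλr²} and ∂_r e_k(λ,r) = e_{k-1}(λ,r); consequently ∂_r^k e_k(λ,r) = e^{-iλr²}, i.e. e_k is a k-th order primitive in r of e^{-iλr²}. -/

import Mathlib

/-!
Statement 4: `e_k(λ,r)` is a `k`-th order primitive in `r` of `e^{-iλr²}`:
`∂_r e₁ = e^{-iλr²}`, `∂_r e_k = e_{k-1}` for `k ≥ 2`, hence `∂_r^k e_k = e^{-iλr²}`.
-/

open Real Complex MeasureTheory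

noncomputable section

/-- `e_k(λ,r) = ((−1)^k/(k−1)!) e^{−ikπ/4} ∫₀^∞ s^{k−1} exp(−iλ(r+e^{−iπ/4}s)²) ds`. -/
def ek (k : ℕ) (lam r : ℝ) : ℂ :=
  ((-1) ^ k / (Nat.factorial (k - 1) : ℂ)) * Complex.exp (-Complex.I * k * π / 4) *
    ∫ s in Set.Ioi (0 : ℝ),
      (s : ℂ) ^ (k - 1) *
        Complex.exp (-Complex.I * lam * ((r : ℂ) + Complex.exp (-Complex.I * π / 4) * s) ^ 2)

namespace EkAux

open Set Filter Topology

/-- `w = e^{-iπ/4}`. -/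
def w : ℂ := Complex.exp (-Complex.I * π / 4)

lemma w_re : w.re = Real.sqrt 2 / 2 := by
  have h : -Complex.I * π / 4 = ((-(π/4) : ℝ) : ℂ) * Complex.I := by push_cast; ring
  rw [w, h, Complex.exp_ofReal_mul_I_re]
  rw [Real.cos_neg, Real.cos_pi_div_four]

lemma w_im : w.im = -(Real.sqrt 2 / 2) := by
  have h : -Complex.I * π / 4 = ((-(π/4) : ℝ) : ℂ) * Complex.I := by push_cast; ring
  rw [w, h, Complex.exp_ofReal_mul_I_im]
  rw [Real.sin_neg, Real.sin_pi_div_four]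

lemma w_ne : w ≠ 0 := Complex.exp_ne_zero _

lemma norm_w : ‖w‖ = 1 := by
  rw [w, Complex.norm_exp]
  norm_num [Complex.div_re]

/-- The basic integrand. -/
def fI (lam : ℝ) (n : ℕ) (r s : ℝ) : ℂ :=
  (s : ℂ) ^ n * Complex.exp (-Complex.I * lam * ((r : ℂ) + w * s) ^ 2)

lemma re_eq (lam r s : ℝ) :
    (-Complex.I * lam * ((r:ℂ) + w * s)^2).re = -(lam*s^2) - Real.sqrt 2 * lam * r * s := by
  simp only [pow_two, Complex.mul_re, Complex.mul_im, Complex.add_re, Complex.add_im,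
    Complex.neg_re, Complex.neg_im, Complex.I_re, Complex.I_im, Complex.ofReal_re,
    Complex.ofReal_im, w_re, w_im]
  ring_nf
  rw [Real.sq_sqrt (by norm_num : (0:ℝ) ≤ 2)]
  ring

lemma norm_f (lam r s : ℝ) (n : ℕ) :
    ‖fI lam n r s‖ = |s|^n * Real.exp (-(lam*s^2) - Real.sqrt 2*lam*r*s) := by
  rw [fI, norm_mul, norm_pow, Complex.norm_real, Real.norm_eq_abs,
    Complex.norm_exp, re_eq]

lemma cont_fI_s (lam : ℝ) (n : ℕ) (r : ℝ) : Continuous (fun s : ℝ => fI lam n r s) := by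
  unfold fI; fun_prop

lemma cont_fI_r (lam : ℝ) (n : ℕ) (s : ℝ) : Continuous (fun r : ℝ => fI lam n r s) := by
  unfold fI; fun_prop

variable {lam : ℝ}

lemma int_aux (hlam : 0 < lam) (n : ℕ) (c : ℝ) :
    IntegrableOn (fun s : ℝ => s ^ n * Real.exp (-(lam*s^2) + c*s)) (Ioi 0) := by
  have hb : 0 < lam/2 := half_pos hlam
  have base : IntegrableOn (fun s : ℝ => s ^ n * Real.exp (-(lam/2) * s^2)) (Ioi 0) := by
    have h := integrableOn_rpow_mul_exp_neg_mul_sq hb (s := (n:ℝ))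
      (lt_of_lt_of_le neg_one_lt_zero (Nat.cast_nonneg n))
    refine h.congr_fun (fun s hs => ?_) measurableSet_Ioi
    beta_reduce
    rw [Real.rpow_natCast]
  refine Integrable.mono (base.const_mul (Real.exp (c^2/(2*lam))))
    (Continuous.aestronglyMeasurable (by fun_prop)).restrict ?_
  filter_upwards [ae_restrict_mem measurableSet_Ioi] with s hs
  have hs0 : (0:ℝ) < s := hs
  have key : Real.exp (-(lam*s^2) + c*s) ≤ Real.exp (c^2/(2*lam)) * Real.exp (-(lam/2)*s^2) := by
    rw [← Real.exp_add, Real.exp_le_exp]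
    have h0 : 0 ≤ lam/2 * (s - c/lam)^2 := by positivity
    have heq : lam/2 * (s - c/lam)^2 = lam/2*s^2 - c*s + c^2/(2*lam) := by
      field_simp
      ring
    nlinarith
  rw [Real.norm_eq_abs, Real.norm_eq_abs, abs_mul, abs_mul, abs_mul, _root_.abs_pow,
    abs_of_pos (Real.exp_pos _), abs_of_pos (Real.exp_pos _), abs_of_pos (Real.exp_pos _)]
  calc |s|^n * Real.exp (-(lam*s^2) + c*s)
      ≤ |s|^n * (Real.exp (c^2/(2*lam)) * Real.exp (-(lam/2)*s^2)) := by
        exact mul_le_mul_of_nonneg_left key (by positivity)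
    _ = Real.exp (c^2/(2*lam)) * (|s|^n * Real.exp (-(lam/2)*s^2)) := by ring

lemma int_f (hlam : 0 < lam) (n : ℕ) (r : ℝ) :
    IntegrableOn (fun s : ℝ => fI lam n r s) (Ioi 0) := by
  refine Integrable.mono (int_aux hlam n (-(Real.sqrt 2*lam*r)))
    ((cont_fI_s lam n r).aestronglyMeasurable).restrict ?_
  filter_upwards [ae_restrict_mem measurableSet_Ioi] with s hs
  have hs0 : (0:ℝ) < s := hs
  rw [norm_f, Real.norm_eq_abs, abs_mul, _root_.abs_pow, abs_of_pos (Real.exp_pos _)]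
  apply le_of_eq
  ring_nf

lemma tendsto_f (hlam : 0 < lam) (n : ℕ) (r : ℝ) :
    Tendsto (fun s : ℝ => fI lam n r s) atTop (𝓝 0) := by
  have hb : 0 < lam/2 := half_pos hlam
  set c : ℝ := -(Real.sqrt 2*lam*r)
  set K : ℝ := Real.exp (c^2/(2*lam))
  have h1 : Tendsto (fun s : ℝ => K * (s ^ (n:ℝ) * Real.exp (-(lam/2)*s^2))) atTop (𝓝 0) := by
    have h2 : Tendsto (fun s : ℝ => s ^ (n:ℝ) * Real.exp (-(lam/2)*s^2)) atTop (𝓝 0) := by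
      refine (rpow_mul_exp_neg_mul_sq_isLittleO_exp_neg hb (n:ℝ)).tendsto_zero_of_tendsto
        (y := (0:ℝ)) ?_
      have h3 : Tendsto (fun x : ℝ => Real.exp (-((1/2 : ℝ)*x))) atTop (𝓝 0) :=
        Real.tendsto_exp_neg_atTop_nhds_zero.comp (tendsto_id.const_mul_atTop one_half_pos)
      simpa [neg_mul] using h3
    simpa using h2.const_mul K
  refine squeeze_zero_norm' ?_ h1
  filter_upwards [eventually_gt_atTop (0:ℝ)] with s hs
  rw [norm_f]
  have key : Real.exp (-(lam*s^2) + c*s) ≤ K * Real.exp (-(lam/2)*s^2) := by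
    rw [← Real.exp_add, Real.exp_le_exp]
    have h0 : 0 ≤ lam/2 * (s - c/lam)^2 := by positivity
    have heq : lam/2 * (s - c/lam)^2 = lam/2*s^2 - c*s + c^2/(2*lam) := by
      field_simp
      ring
    nlinarith
  calc |s|^n * Real.exp (-(lam*s^2) - Real.sqrt 2*lam*r*s)
      = s^(n:ℝ) * Real.exp (-(lam*s^2) + c*s) := by
        rw [Real.rpow_natCast, abs_of_pos hs]; ring_nf; simp only [c]; ring_nf
    _ ≤ s^(n:ℝ) * (K * Real.exp (-(lam/2)*s^2)) := by
        exact mul_le_mul_of_nonneg_left key (by positivity)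
    _ = K * (s ^ (n:ℝ) * Real.exp (-(lam/2)*s^2)) := by ring

/-- Derivative of `fI` in `r`. -/
lemma hasDerivAt_fI_r (lam : ℝ) (n : ℕ) (r s : ℝ) :
    HasDerivAt (fun r' : ℝ => fI lam n r' s)
      ((-Complex.I*lam*(2*((r:ℂ)+w*s))) * fI lam n r s) r := by
  have h1 : HasDerivAt (fun z : ℂ => -Complex.I*lam*(z+w*s)^2)
      (-Complex.I*lam*(2*((r:ℂ)+w*s))) (r:ℂ) := by
    have h0 := ((hasDerivAt_id ((r:ℂ))).add_const (w*s)).pow 2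
    have h2 := h0.const_mul (-Complex.I*(lam:ℂ))
    exact h2.congr_deriv (by simp)
  have h2 := (h1.cexp).const_mul ((s:ℂ)^n)
  have h3 := h2.comp_ofReal
  exact h3.congr_deriv (by simp only [fI]; ring)

/-- Derivative of `fI` in `s`. -/
lemma hasDerivAt_fI_s (lam : ℝ) (n : ℕ) (r s : ℝ) :
    HasDerivAt (fun s' : ℝ => fI lam n r s')
      ((n:ℂ) * (s:ℂ)^(n-1) * Complex.exp (-Complex.I*lam*((r:ℂ)+w*s)^2)
        + w * ((-Complex.I*lam*(2*((r:ℂ)+w*s))) * fI lam n r s)) s := by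
  have hin : HasDerivAt (fun z : ℂ => -Complex.I*lam*((r:ℂ)+w*z)^2)
      (-Complex.I*lam*(2*((r:ℂ)+w*s))*w) (s:ℂ) := by
    have h0 : HasDerivAt (fun z : ℂ => (r:ℂ) + w*z) w (s:ℂ) := by
      simpa using ((hasDerivAt_id ((s:ℂ))).const_mul w).const_add (r:ℂ)
    have h1 := (h0.pow 2).const_mul (-Complex.I*(lam:ℂ))
    exact h1.congr_deriv (by simp; ring)
  have hp : HasDerivAt (fun z : ℂ => z^n) ((n:ℂ) * (s:ℂ)^(n-1)) (s:ℂ) := hasDerivAt_pow n _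
  have h2 := hp.mul hin.cexp
  have h3 := h2.comp_ofReal
  exact h3.congr_deriv (by simp only [fI]; ring)

/-- Integrability of the `r`-derivative integrand. -/
lemma int_f' (hlam : 0 < lam) (n : ℕ) (r : ℝ) :
    IntegrableOn (fun s : ℝ => (-Complex.I*lam*(2*((r:ℂ)+w*s))) * fI lam n r s) (Ioi 0) := by
  have heq : (fun s : ℝ => (-Complex.I*lam*(2*((r:ℂ)+w*s))) * fI lam n r s)
      = fun s : ℝ => (-2*Complex.I*lam*r) * fI lam n r s + (-2*Complex.I*lam*w) * fI lam (n+1) r s := by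
    funext s
    simp only [fI, pow_succ]
    ring
  rw [heq]
  exact ((int_f hlam n r).const_mul _).add ((int_f hlam (n+1) r).const_mul _)

/-- Differentiation under the integral sign. -/
lemma hasDerivAt_G (hlam : 0 < lam) (n : ℕ) (r : ℝ) :
    HasDerivAt (fun r' : ℝ => ∫ s in Ioi (0:ℝ), fI lam n r' s)
      (∫ s in Ioi (0:ℝ), (-Complex.I*lam*(2*((r:ℂ)+w*s))) * fI lam n r s) r := by
  set c0 : ℝ := Real.sqrt 2 * lam * (|r| + 1) with hc0
  have hbd : IntegrableOn
      (fun s : ℝ => 2*lam*((|r|+1) + s) * (s^n * Real.exp (-(lam*s^2) + c0*s))) (Ioi 0) := by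
    have heq : (fun s : ℝ => 2*lam*((|r|+1) + s) * (s^n * Real.exp (-(lam*s^2) + c0*s)))
        = fun s : ℝ => (2*lam*(|r|+1)) * (s^n * Real.exp (-(lam*s^2) + c0*s))
          + (2*lam) * (s^(n+1) * Real.exp (-(lam*s^2) + c0*s)) := by
      funext s; ring
    rw [heq]
    exact ((int_aux hlam n c0).const_mul _).add ((int_aux hlam (n+1) c0).const_mul _)
  have key := hasDerivAt_integral_of_dominated_loc_of_deriv_le
    (μ := volume.restrict (Ioi (0:ℝ))) (x₀ := r) (s := Metric.ball r 1)
    (F := fun r' s => fI lam n r' s)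
    (F' := fun r' s => (-Complex.I*lam*(2*((r':ℂ)+w*s))) * fI lam n r' s)
    (bound := fun s => 2*lam*((|r|+1) + s) * (s^n * Real.exp (-(lam*s^2) + c0*s)))
    (Metric.ball_mem_nhds r one_pos)
    (Eventually.of_forall fun r' => ((cont_fI_s lam n r').aestronglyMeasurable).restrict)
    (int_f hlam n r)
    (Continuous.aestronglyMeasurable (by unfold fI; fun_prop)).restrict
    ?_ hbd ?_
  · exact key.2
  · filter_upwards [ae_restrict_mem measurableSet_Ioi] with s hs
    intro x hx
    have hs0 : (0:ℝ) < s := hs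
    have hx1 : |x| ≤ |r| + 1 := by
      have := Metric.mem_ball.mp hx
      rw [Real.dist_eq] at this
      calc |x| = |(x - r) + r| := by ring_nf
        _ ≤ |x - r| + |r| := abs_add_le _ _
        _ ≤ |r| + 1 := by linarith
    have hnorm : ‖(-Complex.I*(lam:ℂ)*(2*((x:ℂ)+w*s))) * fI lam n x s‖
        = 2*lam*‖(x:ℂ)+w*s‖ * (|s|^n * Real.exp (-(lam*s^2) - Real.sqrt 2*lam*x*s)) := by
      rw [norm_mul, norm_f]
      have : ‖-Complex.I*(lam:ℂ)*(2*((x:ℂ)+w*s))‖ = 2*lam*‖(x:ℂ)+w*s‖ := by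
        rw [norm_mul, norm_mul, norm_neg, Complex.norm_I, Complex.norm_real, norm_mul]
        simp [abs_of_pos hlam]
        ring
      rw [this]
    rw [hnorm]
    have hu : ‖(x:ℂ)+w*s‖ ≤ (|r|+1) + s := by
      calc ‖(x:ℂ)+w*s‖ ≤ ‖(x:ℂ)‖ + ‖w*s‖ := norm_add_le _ _
        _ = |x| + s := by
            simp [norm_mul, norm_w, Complex.norm_real, Real.norm_eq_abs, abs_of_pos hs0,
              show ‖w‖ = 1 from norm_w]
        _ ≤ (|r|+1) + s := by linarith
    have hexp : Real.exp (-(lam*s^2) - Real.sqrt 2*lam*x*s) ≤ Real.exp (-(lam*s^2) + c0*s) := by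
      rw [Real.exp_le_exp, hc0]
      have h1 : -x ≤ |r| + 1 := (neg_le_abs x).trans hx1
      have h2 : 0 ≤ Real.sqrt 2 * lam * s := by positivity
      nlinarith [Real.sqrt_nonneg 2, mul_le_mul_of_nonneg_left h1 h2]
    rw [abs_of_pos hs0]
    calc 2*lam*‖(x:ℂ)+w*s‖ * (s^n * Real.exp (-(lam*s^2) - Real.sqrt 2*lam*x*s))
        ≤ 2*lam*((|r|+1)+s) * (s^n * Real.exp (-(lam*s^2) + c0*s)) := by
          gcongr
    _ = _ := rfl
  · filter_upwards [ae_restrict_mem measurableSet_Ioi] with s hs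
    intro x _
    exact hasDerivAt_fI_r lam n x s

/-- Integration by parts, base case. -/
lemma ibp0 (hlam : 0 < lam) (r : ℝ) :
    ∫ s in Ioi (0:ℝ), (-Complex.I*lam*(2*((r:ℂ)+w*s))) * fI lam 0 r s
      = -(1/w) * Complex.exp (-Complex.I*lam*(r:ℂ)^2) := by
  have hftc : ∫ s in Ioi (0:ℝ), w * ((-Complex.I*lam*(2*((r:ℂ)+w*s))) * fI lam 0 r s)
      = 0 - fI lam 0 r 0 := by
    apply integral_Ioi_of_hasDerivAt_of_tendsto
      ((cont_fI_s lam 0 r).continuousWithinAt)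
      (fun s _ => by
        have h := hasDerivAt_fI_s lam 0 r s
        simpa using h)
      ((int_f' hlam 0 r).const_mul w)
      (tendsto_f hlam 0 r)
  rw [MeasureTheory.integral_const_mul] at hftc
  have h0 : fI lam 0 r 0 = Complex.exp (-Complex.I*lam*(r:ℂ)^2) := by
    simp [fI]
  rw [h0] at hftc
  field_simp [w_ne] at hftc ⊢
  linear_combination hftc

/-- Integration by parts, inductive case. -/
lemma ibpS (hlam : 0 < lam) (n : ℕ) (r : ℝ) :
    ∫ s in Ioi (0:ℝ), (-Complex.I*lam*(2*((r:ℂ)+w*s))) * fI lam (n+1) r s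
      = (-((n:ℂ)+1)/w) * ∫ s in Ioi (0:ℝ), fI lam n r s := by
  have hftc : ∫ s in Ioi (0:ℝ),
      (((n:ℂ)+1) * fI lam n r s + w * ((-Complex.I*lam*(2*((r:ℂ)+w*s))) * fI lam (n+1) r s))
      = 0 - fI lam (n+1) r 0 := by
    apply integral_Ioi_of_hasDerivAt_of_tendsto
      ((cont_fI_s lam (n+1) r).continuousWithinAt)
      (fun s _ => by
        have h := hasDerivAt_fI_s lam (n+1) r s
        have heq : ((n:ℂ)+1) * (s:ℂ)^(n+1-1) * Complex.exp (-Complex.I*lam*((r:ℂ)+w*s)^2)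
            = ((n:ℂ)+1) * fI lam n r s := by
          simp only [fI, Nat.add_sub_cancel]; ring
        rw [show ((n+1:ℕ):ℂ) = (n:ℂ)+1 by push_cast; ring, heq] at h
        exact h)
      (((int_f hlam n r).const_mul _).add ((int_f' hlam (n+1) r).const_mul w))
      (tendsto_f hlam (n+1) r)
  rw [MeasureTheory.integral_add ((int_f hlam n r).const_mul _)
    ((int_f' hlam (n+1) r).const_mul w), MeasureTheory.integral_const_mul,
    MeasureTheory.integral_const_mul] at hftc
  have h0 : fI lam (n+1) r 0 = 0 := by simp [fI]
  rw [h0] at hftc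
  field_simp [w_ne] at hftc ⊢
  linear_combination hftc

end EkAux

open EkAux Set

theorem ek_primitive (lam : ℝ) (hlam : 0 < lam) :
    (∀ r : ℝ, deriv (fun r' : ℝ => ek 1 lam r') r =
        Complex.exp (-Complex.I * lam * (r : ℂ) ^ 2)) ∧
    (∀ k : ℕ, 2 ≤ k → ∀ r : ℝ,
        deriv (fun r' : ℝ => ek k lam r') r = ek (k - 1) lam r) ∧
    (∀ k : ℕ, 1 ≤ k → ∀ r : ℝ,
        deriv^[k] (fun r' : ℝ => ek k lam r') r =
          Complex.exp (-Complex.I * lam * (r : ℂ) ^ 2)) := by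
  have part1 : ∀ r : ℝ, deriv (fun r' : ℝ => ek 1 lam r') r =
      Complex.exp (-Complex.I * lam * (r : ℂ) ^ 2) := by
    intro r
    have hek : (fun r' : ℝ => ek 1 lam r') = fun r' : ℝ =>
        (((-1:ℂ)^(1:ℕ) / (Nat.factorial 0 : ℂ)) * Complex.exp (-Complex.I*((1:ℕ):ℂ)*π/4)) *
          ∫ s in Ioi (0:ℝ), fI lam 0 r' s := rfl
    have h := (hasDerivAt_G hlam 0 r).const_mul
      (((-1:ℂ)^(1:ℕ) / (Nat.factorial 0 : ℂ)) * Complex.exp (-Complex.I*((1:ℕ):ℂ)*π/4))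
    rw [← hek] at h
    rw [h.deriv, ibp0 hlam r]
    have hw : Complex.exp (-Complex.I*((1:ℕ):ℂ)*π/4) = w := by
      rw [w]; norm_num
    rw [hw]
    simp only [Nat.factorial_zero, Nat.cast_one, pow_one]
    field_simp [w_ne]
  have part2 : ∀ k : ℕ, 2 ≤ k → ∀ r : ℝ,
      deriv (fun r' : ℝ => ek k lam r') r = ek (k - 1) lam r := by
    intro k hk r
    obtain ⟨n, rfl⟩ : ∃ n, k = n + 2 := ⟨k - 2, by omega⟩
    have hek : (fun r' : ℝ => ek (n+2) lam r') = fun r' : ℝ =>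
        (((-1:ℂ)^(n+2) / (Nat.factorial (n+1) : ℂ)) * Complex.exp (-Complex.I*((n+2:ℕ):ℂ)*π/4)) *
          ∫ s in Ioi (0:ℝ), fI lam (n+1) r' s := rfl
    have h := (hasDerivAt_G hlam (n+1) r).const_mul
      (((-1:ℂ)^(n+2) / (Nat.factorial (n+1) : ℂ)) * Complex.exp (-Complex.I*((n+2:ℕ):ℂ)*π/4))
    rw [← hek] at h
    rw [h.deriv, ibpS hlam n r]
    show _ = ek (n+1) lam r
    have hek' : ek (n+1) lam r =
        (((-1:ℂ)^(n+1) / (Nat.factorial n : ℂ)) * Complex.exp (-Complex.I*((n+1:ℕ):ℂ)*π/4)) *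
          ∫ s in Ioi (0:ℝ), fI lam n r s := rfl
    rw [hek']
    have hsplit : Complex.exp (-Complex.I*((n+2:ℕ):ℂ)*π/4)
        = Complex.exp (-Complex.I*((n+1:ℕ):ℂ)*π/4) * w := by
      rw [w, ← Complex.exp_add]
      congr 1
      push_cast
      ring
    rw [hsplit]
    have hfac : (Nat.factorial (n+1) : ℂ) = ((n:ℂ)+1) * (Nat.factorial n : ℂ) := by
      rw [Nat.factorial_succ]; push_cast; ring
    rw [hfac]
    have hn1 : ((n:ℂ)+1) ≠ 0 := Nat.cast_add_one_ne_zero n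
    have hfn : (Nat.factorial n : ℂ) ≠ 0 :=
      Nat.cast_ne_zero.mpr (Nat.factorial_ne_zero n)
    field_simp [w_ne]
    ring
  refine ⟨part1, part2, ?_⟩
  intro k hk
  induction k with
  | zero => omega
  | succ m ih =>
    intro r
    rcases Nat.lt_or_ge m 1 with hm | hm
    · interval_cases m
      simpa using part1 r
    · rw [Function.iterate_succ_apply]
      have hder : deriv (fun r' : ℝ => ek (m+1) lam r') = fun r' : ℝ => ek m lam r' := by
        funext r'
        have := part2 (m+1) (by omega) r'
        simpa using this
      rw [hder]
      exact ih hm r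

end
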